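/- Let F be a bounded nonnegative real random variable on a probability space and a > 0. Assume that for every u < 0, Ent(exp(uF)) ≤ φ(−u)·a·E[F·exp(uF)]. Then for every λ < 0, log E[exp(λ(F − E F))] ≤ (a·φ(−λ)/(1 − a·φ(−λ)/λ))·E F. -/

import Mathlib

open MeasureTheory

/-- Entropy of a (nonnegative) random variable: `Ent(Z) = E[Z log Z] − E[Z] log E[Z]`. -/
noncomputable def Ent {Ω : Type*} [MeasurableSpace Ω] (P : Measure Ω) (Z : Ω → ℝ) : ℝ :=
  (∫ ω, Z ω * Real.log (Z ω) ∂P) - (∫ ω, Z ω ∂P) * Real.log (∫ ω, Z ω ∂P)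

/-- `φ(z) = e^z − z − 1`. -/
noncomputable def phiFn (z : ℝ) : ℝ := Real.exp z - z - 1

lemma aux_f_nonpos {t : ℝ} (ht : t ≤ 0) :
    t + t * Real.exp (-t) + 2 * Real.exp (-t) - 2 ≤ 0 := by
  have hderiv : ∀ s : ℝ, HasDerivAt (fun u => u + u * Real.exp (-u) + 2 * Real.exp (-u) - 2)
      (1 - (1 + s) * Real.exp (-s)) s := by
    intro s
    have he : HasDerivAt (fun u : ℝ => Real.exp (-u)) (-Real.exp (-s)) s := by
      simpa [Function.comp_def] using (Real.hasDerivAt_exp (-s)).comp s ((hasDerivAt_id s).neg)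
    have h1 : HasDerivAt (fun u : ℝ => u * Real.exp (-u))
        (1 * Real.exp (-s) + s * -Real.exp (-s)) s := (hasDerivAt_id s).mul he
    have := (((hasDerivAt_id s).add h1).add (he.const_mul 2)).sub_const 2
    exact this.congr_deriv (by ring)
  have hmono : Monotone (fun u : ℝ => u + u * Real.exp (-u) + 2 * Real.exp (-u) - 2) := by
    apply monotone_of_deriv_nonneg
    · exact fun s => (hderiv s).differentiableAt
    · intro s
      rw [(hderiv s).deriv]
      have h1 : (1 + s) * Real.exp (-s) ≤ Real.exp s * Real.exp (-s) :=
        mul_le_mul_of_nonneg_right (by simpa [add_comm] using Real.add_one_le_exp s)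
          (Real.exp_pos _).le
      rw [← Real.exp_add] at h1
      simp at h1
      linarith
  have := hmono ht
  simpa using this

lemma phiFn_nonneg (z : ℝ) : 0 ≤ phiFn z := by
  have := Real.add_one_le_exp z
  simp [phiFn]; linarith

lemma mgf_hasDerivAt {Ω : Type*} [MeasurableSpace Ω] (P : Measure Ω) [IsProbabilityMeasure P]
    (F : Ω → ℝ) (hsm : AEStronglyMeasurable F P) (hF0 : ∀ ω, 0 ≤ F ω)
    (M : ℝ) (hM : ∀ ω, F ω ≤ M) (hM0 : 0 ≤ M) (t0 : ℝ) :
    HasDerivAt (fun t => ∫ ω, Real.exp (t * F ω) ∂P)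
      (∫ ω, F ω * Real.exp (t0 * F ω) ∂P) t0 := by
  have hmeasx : ∀ x : ℝ, AEStronglyMeasurable (fun ω => Real.exp (x * F ω)) P := fun x =>
    (Real.continuous_exp.comp (continuous_const.mul continuous_id)).comp_aestronglyMeasurable hsm
  have key := hasDerivAt_integral_of_dominated_loc_of_deriv_le (μ := P)
    (F := fun (t : ℝ) ω => Real.exp (t * F ω))
    (F' := fun (t : ℝ) ω => F ω * Real.exp (t * F ω))
    (x₀ := t0) (s := Metric.ball t0 1) (bound := fun _ => M * Real.exp ((|t0| + 1) * M))
    (Metric.ball_mem_nhds t0 one_pos)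
    (Filter.Eventually.of_forall fun x => hmeasx x)
    (by
      refine (integrable_const (Real.exp (|t0| * M))).mono' (hmeasx t0) ?_
      refine Filter.Eventually.of_forall fun ω => ?_
      rw [Real.norm_of_nonneg (Real.exp_pos _).le]
      refine Real.exp_le_exp.2 ?_
      calc t0 * F ω ≤ |t0 * F ω| := le_abs_self _
        _ = |t0| * F ω := by rw [abs_mul, abs_of_nonneg (hF0 ω)]
        _ ≤ |t0| * M := mul_le_mul_of_nonneg_left (hM ω) (abs_nonneg _))
    (hsm.mul (hmeasx t0))
    (by
      refine Filter.Eventually.of_forall fun ω => fun x hx => ?_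
      have hxb : |x| ≤ |t0| + 1 := by
        have : |x - t0| < 1 := by simpa [Real.dist_eq] using hx
        calc |x| = |t0 + (x - t0)| := by ring_nf
          _ ≤ |t0| + |x - t0| := abs_add_le _ _
          _ ≤ |t0| + 1 := by linarith
      rw [Real.norm_of_nonneg (mul_nonneg (hF0 ω) (Real.exp_pos _).le)]
      refine mul_le_mul (hM ω) (Real.exp_le_exp.2 ?_) (Real.exp_pos _).le hM0
      calc x * F ω ≤ |x * F ω| := le_abs_self _
        _ = |x| * F ω := by rw [abs_mul, abs_of_nonneg (hF0 ω)]
        _ ≤ (|t0| + 1) * M := mul_le_mul hxb (hM ω) (hF0 ω) (by positivity))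
    (integrable_const _)
    (by
      refine Filter.Eventually.of_forall fun ω => fun x _ => ?_
      have := ((hasDerivAt_id x).mul_const (F ω)).exp
      simpa [mul_comm] using this)
  exact key.2

lemma exp_mul_integrable {Ω : Type*} [MeasurableSpace Ω] (P : Measure Ω) [IsProbabilityMeasure P]
    (F : Ω → ℝ) (hsm : AEStronglyMeasurable F P) (hF0 : ∀ ω, 0 ≤ F ω)
    (M : ℝ) (hM : ∀ ω, F ω ≤ M) (t : ℝ) :
    Integrable (fun ω => Real.exp (t * F ω)) P := by
  refine (integrable_const (Real.exp (|t| * M))).mono'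
    ((Real.continuous_exp.comp (continuous_const.mul continuous_id)).comp_aestronglyMeasurable hsm)
    (Filter.Eventually.of_forall fun ω => ?_)
  rw [Real.norm_of_nonneg (Real.exp_pos _).le]
  refine Real.exp_le_exp.2 ?_
  calc t * F ω ≤ |t * F ω| := le_abs_self _
    _ = |t| * F ω := by rw [abs_mul, abs_of_nonneg (hF0 ω)]
    _ ≤ |t| * M := mul_le_mul_of_nonneg_left (hM ω) (abs_nonneg _)

/-- The bounded case of Theorem 3.11: if `F` is bounded and nonnegative, `a > 0` and
`Ent(e^{uF}) ≤ φ(−u)·a·E[F e^{uF}]` for all `u < 0`, then for every `λ < 0`,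
`log E[e^{λ(F − EF)}] ≤ (a·φ(−λ)/(1 − a·φ(−λ)/λ))·EF`. -/
theorem lower_tail_mgf_bound {Ω : Type*} [MeasurableSpace Ω]
    (P : Measure Ω) [IsProbabilityMeasure P]
    (F : Ω → ℝ) (hF0 : ∀ ω, 0 ≤ F ω) (hFbdd : ∃ M : ℝ, ∀ ω, F ω ≤ M)
    (a : ℝ) (ha : 0 < a)
    (hEnt : ∀ u : ℝ, u < 0 →
      Ent P (fun ω => Real.exp (u * F ω)) ≤
        phiFn (-u) * a * ∫ ω, F ω * Real.exp (u * F ω) ∂P) :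
    ∀ lam : ℝ, lam < 0 →
      Real.log (∫ ω, Real.exp (lam * (F ω - ∫ ω', F ω' ∂P)) ∂P) ≤
        a * phiFn (-lam) / (1 - a * phiFn (-lam) / lam) * ∫ ω', F ω' ∂P := by
  intro lam hlam
  by_cases hsm : AEStronglyMeasurable F P
  case neg =>
    -- degenerate case: F not a.e. strongly measurable, all integrals vanish
    have hc : ∫ ω', F ω' ∂P = 0 := integral_undef (fun h => hsm h.aestronglyMeasurable)
    rw [hc, mul_zero]
    have hnint : ¬ Integrable (fun ω => Real.exp (lam * (F ω - 0))) P := by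
      intro h
      apply hsm
      have h0 : AEMeasurable (fun ω => Real.log (Real.exp (lam * (F ω - 0)))) P :=
        Real.measurable_log.comp_aemeasurable h.aestronglyMeasurable.aemeasurable
      have h1 : AEStronglyMeasurable (fun ω => Real.log (Real.exp (lam * (F ω - 0))) * lam⁻¹) P :=
        (h0.mul_const lam⁻¹).aestronglyMeasurable
      convert h1 using 1
      funext ω
      rw [Real.log_exp, sub_zero, mul_comm, ← mul_assoc, inv_mul_cancel₀ (ne_of_lt hlam), one_mul]
    rw [integral_undef hnint, Real.log_zero]
  case pos =>
  obtain ⟨M0, hM0⟩ := hFbdd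
  set M : ℝ := max M0 0 with hMdef
  have hM : ∀ ω, F ω ≤ M := fun ω => le_max_of_le_left (hM0 ω)
  have hMnn : (0:ℝ) ≤ M := le_max_right _ _
  set c : ℝ := ∫ ω', F ω' ∂P with hc
  set m : ℝ → ℝ := fun t => ∫ ω, Real.exp (t * F ω) ∂P with hm
  set m' : ℝ → ℝ := fun t => ∫ ω, F ω * Real.exp (t * F ω) ∂P with hm'
  have hm_deriv : ∀ t, HasDerivAt m (m' t) t := fun t =>
    mgf_hasDerivAt P F hsm hF0 M hM hMnn t
  have hint : ∀ t, Integrable (fun ω => Real.exp (t * F ω)) P := fun t =>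
    exp_mul_integrable P F hsm hF0 M hM t
  have hm_pos : ∀ t, 0 < m t := by
    intro t
    have hle : ∀ ω, Real.exp (-(|t| * M)) ≤ Real.exp (t * F ω) := by
      intro ω
      refine Real.exp_le_exp.2 ?_
      have : |t * F ω| ≤ |t| * M := by
        rw [abs_mul, abs_of_nonneg (hF0 ω)]
        exact mul_le_mul_of_nonneg_left (hM ω) (abs_nonneg _)
      have := neg_abs_le (t * F ω)
      linarith [abs_mul t (F ω) ▸ this]
    calc (0:ℝ) < Real.exp (-(|t| * M)) := Real.exp_pos _
      _ = ∫ _ω, Real.exp (-(|t| * M)) ∂P := by simp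
      _ ≤ m t := integral_mono (integrable_const _) (hint t) hle
  have hm_le_one : ∀ t ≤ 0, m t ≤ 1 := by
    intro t ht
    have hle : ∀ ω, Real.exp (t * F ω) ≤ 1 := fun ω =>
      Real.exp_le_one_iff.2 (mul_nonpos_of_nonpos_of_nonneg ht (hF0 ω))
    calc m t ≤ ∫ _ω, (1:ℝ) ∂P := integral_mono (hint t) (integrable_const _) hle
      _ = 1 := by simp
  have hm'_nonneg : ∀ t, 0 ≤ m' t := fun t =>
    integral_nonneg fun ω => mul_nonneg (hF0 ω) (Real.exp_pos _).le
  set H : ℝ → ℝ := fun t => Real.log (m t) with hH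
  have hH_deriv : ∀ t, HasDerivAt H (m' t / m t) t := fun t =>
    (hm_deriv t).log (hm_pos t).ne'
  have hm_zero : m 0 = 1 := by simp [hm]
  have hm'_zero : m' 0 = c := by simp [hm', hc]
  have hH_zero : H 0 = 0 := by simp [hH, hm_zero]
  have hH_nonpos : ∀ t ≤ 0, H t ≤ 0 := fun t ht => Real.log_nonpos (hm_pos t).le (hm_le_one t ht)
  -- key differential inequality from entropy hypothesis
  have hkey : ∀ u < 0, m' u / m u * (u - a * phiFn (-u)) ≤ H u := by
    intro u hu
    have hE := hEnt u hu
    have hEnt_eq : Ent P (fun ω => Real.exp (u * F ω)) = u * m' u - m u * H u := by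
      rw [Ent]
      have h1 : (∫ ω, Real.exp (u * F ω) * Real.log (Real.exp (u * F ω)) ∂P) = u * m' u := by
        have : (fun ω => Real.exp (u * F ω) * Real.log (Real.exp (u * F ω)))
            = fun ω => u * (F ω * Real.exp (u * F ω)) := by
          funext ω; rw [Real.log_exp]; ring
        rw [this, integral_const_mul]
      rw [h1]
    rw [hEnt_eq] at hE
    rw [div_mul_eq_mul_div, div_le_iff₀ (hm_pos u)]
    nlinarith [hE]
  -- β and its derivative
  set β : ℝ → ℝ := fun t => t - a * phiFn (-t) with hβ
  have hβ_deriv : ∀ t, HasDerivAt β (1 - a * (1 - Real.exp (-t))) t := by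
    intro t
    have he : HasDerivAt (fun u : ℝ => Real.exp (-u)) (-Real.exp (-t)) t := by
      simpa [Function.comp_def] using (Real.hasDerivAt_exp (-t)).comp t ((hasDerivAt_id t).neg)
    have hphi : HasDerivAt (fun u : ℝ => phiFn (-u)) (-Real.exp (-t) + 1) t := by
      have : (fun u : ℝ => phiFn (-u)) = fun u : ℝ => Real.exp (-u) + u - 1 := by
        funext u; simp only [phiFn]; ring
      rw [this]
      simpa using (he.add (hasDerivAt_id t)).sub_const 1
    have := (hasDerivAt_id t).sub (hphi.const_mul a)
    exact this.congr_deriv (by ring)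
  have hβ_neg : ∀ t < 0, β t < 0 := by
    intro t ht
    have := phiFn_nonneg (-t)
    have : 0 ≤ a * phiFn (-t) := mul_nonneg ha.le this
    simp only [hβ]
    linarith
  have hβ_zero : β 0 = 0 := by simp [hβ, phiFn]
  -- w and its monotonicity
  set w : ℝ → ℝ := fun t => H t * β t / t ^ 2 with hw
  have hw_deriv : ∀ t < 0, HasDerivAt w
      (((m' t / m t * β t + H t * (1 - a * (1 - Real.exp (-t)))) * t ^ 2 -
        H t * β t * (2 * t)) / (t ^ 2) ^ 2) t := by
    intro t ht
    have h1 := ((hH_deriv t).mul (hβ_deriv t)).div (hasDerivAt_pow 2 t)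
      (pow_ne_zero 2 (ne_of_lt ht))
    exact h1.congr_deriv (by simp)
  have hw_anti : AntitoneOn w (Set.Iio 0) := by
    apply antitoneOn_of_deriv_nonpos (convex_Iio 0)
    · exact fun t ht => ((hw_deriv t ht).differentiableAt).continuousAt.continuousWithinAt
    · rw [interior_Iio]
      exact fun t ht => ((hw_deriv t ht).differentiableAt).differentiableWithinAt
    · rw [interior_Iio]
      intro t ht
      rw [(hw_deriv t ht).deriv]
      apply div_nonpos_of_nonpos_of_nonneg _ (by positivity)
      -- numerator ≤ 0
      have hDβ : m' t / m t * β t ≤ H t := by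
        have h := hkey t ht
        calc m' t / m t * β t = m' t / m t * (t - a * phiFn (-t)) := by rw [hβ]
          _ ≤ H t := h
      have hHt : H t ≤ 0 := hH_nonpos t (le_of_lt ht)
      have hf : t + t * Real.exp (-t) + 2 * Real.exp (-t) - 2 ≤ 0 := aux_f_nonpos ht.le
      have hid : (H t + H t * (1 - a * (1 - Real.exp (-t)))) * t ^ 2 - H t * β t * (2 * t)
          = (t * H t) * (a * (t + t * Real.exp (-t) + 2 * Real.exp (-t) - 2)) := by
        simp only [hβ, phiFn]
        ring
      have htH : 0 ≤ t * H t := by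
        have := mul_nonneg (neg_nonneg.2 ht.le) (neg_nonneg.2 hHt)
        simpa [neg_mul_neg] using this
      have h2 : (t * H t) * (a * (t + t * Real.exp (-t) + 2 * Real.exp (-t) - 2)) ≤ 0 :=
        mul_nonpos_of_nonneg_of_nonpos htH (mul_nonpos_of_nonneg_of_nonpos ha.le hf)
      have h3 : m' t / m t * β t * t ^ 2 ≤ H t * t ^ 2 :=
        mul_le_mul_of_nonneg_right hDβ (sq_nonneg t)
      calc (m' t / m t * β t + H t * (1 - a * (1 - Real.exp (-t)))) * t ^ 2 -
            H t * β t * (2 * t)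
          = m' t / m t * β t * t ^ 2 +
            (H t * (1 - a * (1 - Real.exp (-t))) * t ^ 2 - H t * β t * (2 * t)) := by ring
        _ ≤ H t * t ^ 2 +
            (H t * (1 - a * (1 - Real.exp (-t))) * t ^ 2 - H t * β t * (2 * t)) := by linarith
        _ = (t * H t) * (a * (t + t * Real.exp (-t) + 2 * Real.exp (-t) - 2)) := by
            simp only [hβ, phiFn]; ring
        _ ≤ 0 := h2
  -- limit of w at 0⁻ is c
  have hlim : Filter.Tendsto w (nhdsWithin 0 (Set.Iio 0)) (nhds c) := by
    have hH0 : HasDerivAt H c 0 := by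
      have := hH_deriv 0
      rwa [hm_zero, hm'_zero, div_one] at this
    have hβ0 : HasDerivAt β 1 0 := by
      have := hβ_deriv 0
      simpa using this
    have h1 : Filter.Tendsto (slope H 0) (nhdsWithin 0 {(0:ℝ)}ᶜ) (nhds c) :=
      hasDerivAt_iff_tendsto_slope.mp hH0
    have h2 : Filter.Tendsto (slope β 0) (nhdsWithin 0 {(0:ℝ)}ᶜ) (nhds 1) :=
      hasDerivAt_iff_tendsto_slope.mp hβ0
    have hmono : nhdsWithin (0:ℝ) (Set.Iio 0) ≤ nhdsWithin 0 {(0:ℝ)}ᶜ :=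
      nhdsWithin_mono 0 (fun x hx => ne_of_lt hx)
    have h3 : Filter.Tendsto (fun t => slope H 0 t * slope β 0 t)
        (nhdsWithin 0 (Set.Iio 0)) (nhds (c * 1)) :=
      ((h1.mono_left hmono).mul (h2.mono_left hmono))
    rw [mul_one] at h3
    refine Filter.Tendsto.congr' ?_ h3
    filter_upwards [self_mem_nhdsWithin] with t ht
    have htne : t ≠ 0 := ne_of_lt ht
    simp only [slope_def_field, hH_zero, hβ_zero, sub_zero, hw]
    rw [div_mul_div_comm, ← pow_two]
  -- conclusion: c ≤ w lam
  have hwc : c ≤ w lam := by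
    refine le_of_tendsto hlim ?_
    filter_upwards [Ioo_mem_nhdsLT_of_mem (Set.mem_Ioc.2 ⟨hlam, le_refl 0⟩)] with t ht
    exact hw_anti (Set.mem_Iio.2 hlam) (Set.mem_Iio.2 ht.2) ht.1.le
  have hc_nonneg : 0 ≤ c := integral_nonneg hF0
  have hβlam : β lam < 0 := hβ_neg lam hlam
  have h1 : c * lam ^ 2 ≤ H lam * β lam := by
    rw [hw] at hwc
    exact (le_div_iff₀ (by nlinarith : (0:ℝ) < lam ^ 2)).mp hwc
  -- rewrite LHS
  have hLHS : (∫ ω, Real.exp (lam * (F ω - c)) ∂P) = Real.exp (-(lam * c)) * m lam := by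
    have : (fun ω => Real.exp (lam * (F ω - c)))
        = fun ω => Real.exp (-(lam * c)) * Real.exp (lam * F ω) := by
      funext ω; rw [← Real.exp_add]; ring_nf
    rw [this, integral_const_mul]
  rw [hLHS, Real.log_mul (Real.exp_ne_zero _) (hm_pos lam).ne', Real.log_exp]
  -- final algebra
  have hden : 1 - a * phiFn (-lam) / lam = β lam / lam := by
    rw [hβ, sub_div, div_self (ne_of_lt hlam)]
  rw [hden, div_div_eq_mul_div, div_mul_eq_mul_div, le_div_iff_of_neg hβlam]
  simp only [hβ] at h1 ⊢
  have hHl : Real.log (m lam) = H lam := rfl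
  rw [hHl]
  nlinarith [h1]
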